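/- arXiv:2009.11131 — 3 statements merged into one kernel-verified Lean document; each statement's English description precedes it below -/
import Mathlib

section
/- Let ω_rα > 0, ω_l > 0, β ≥ 0, λ ∈ (−1, 0], and ω > 0. Define z(ω) = iω/ω_rα² + 2β/ω_rα + (1 + iω/ω_l)^λ ∈ ℂ, using the principal branch of the complex power. Then arg z(ω) = 0 (equivalently, the FOSRE phase ψ(ω) = −arg z(ω) vanishes) if and only if ω = −ω_rα² · (ω²/ω_l² + 1)^{λ/2} · sin(λ · arctan(ω/ω_l)). -/
open Real Complex

/-- The FOSRE linear-behaviour frequency equation: for ω_rα > 0, ω_l > 0, β ≥ 0,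
λ ∈ (−1, 0] and ω > 0, the argument of
z(ω) = iω/ω_rα² + 2β/ω_rα + (1 + iω/ω_l)^λ (principal branch) vanishes
iff ω = −ω_rα² (ω²/ω_l² + 1)^{λ/2} sin(λ arctan(ω/ω_l)). -/
theorem fosre_linear_behaviour_frequency
    (ωrα ωl β lam ω : ℝ)
    (hωrα : 0 < ωrα) (hωl : 0 < ωl) (hβ : 0 ≤ β)
    (hlam : lam ∈ Set.Ioc (-1 : ℝ) 0) (hω : 0 < ω)
    (z : ℂ)
    (hz : z = Complex.I * ω / (ωrα ^ 2) + 2 * β / ωrα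
              + (1 + Complex.I * ω / ωl) ^ (lam : ℂ)) :
    z.arg = 0 ↔
      ω = -ωrα ^ 2 * (ω ^ 2 / ωl ^ 2 + 1) ^ (lam / 2) *
            Real.sin (lam * Real.arctan (ω / ωl)) := by
  obtain ⟨hlam1, hlam0⟩ := hlam
  set a := ω / ωl with ha
  have ha0 : 0 < a := div_pos hω hωl
  set θ := lam * Real.arctan a with hθdef
  set A := (ω ^ 2 / ωl ^ 2 + 1) ^ (lam / 2) with hAdef
  have hb : (0:ℝ) < ω ^ 2 / ωl ^ 2 + 1 := by positivity
  have hA0 : 0 < A := Real.rpow_pos_of_pos hb _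
  -- the complex power
  have hpow : (1 + Complex.I * ω / ωl) ^ (lam : ℂ)
      = ((A : ℝ) : ℂ) * Complex.exp ((θ : ℝ) * Complex.I) := by
    set w : ℂ := 1 + Complex.I * ω / ωl with hw
    have hwre : w.re = 1 := by simp [hw]
    have hwim : w.im = a := by
      simp [hw, ha, Complex.div_im]; field_simp
    have hw0 : w ≠ 0 := by
      intro h; rw [h] at hwre; simp at hwre
    have habs : ‖w‖ = Real.sqrt (ω ^ 2 / ωl ^ 2 + 1) := by
      rw [Complex.norm_def, Complex.normSq_apply, hwre, hwim, ha]
      congr 1; field_simp; ring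
    have harg : w.arg = Real.arctan a := by
      have ht := Complex.tan_arg w
      rw [hwre, hwim, div_one] at ht
      rw [← ht, Real.arctan_tan]
      · exact Complex.neg_pi_div_two_lt_arg_iff.2 (Or.inl (by rw [hwre]; norm_num))
      · exact Complex.arg_lt_pi_div_two_iff.2 (Or.inl (by rw [hwre]; norm_num))
    rw [Complex.cpow_def_of_ne_zero hw0, Complex.log, habs, harg]
    rw [add_mul, Complex.exp_add]
    congr 1
    · rw [← Complex.ofReal_mul, ← Complex.ofReal_exp]
      norm_cast
      rw [hAdef, Real.rpow_def_of_pos hb, Real.log_sqrt hb.le]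
      ring_nf
    · congr 1; rw [hθdef, Complex.ofReal_mul]; ring
  -- real-imaginary decomposition of z
  have hzdec : z = (((2 * β / ωrα + A * Real.cos θ : ℝ)) : ℂ)
      + ((ω / ωrα ^ 2 + A * Real.sin θ : ℝ)) * Complex.I := by
    rw [hz, hpow, Complex.exp_mul_I]
    push_cast
    ring
  have hzre : z.re = 2 * β / ωrα + A * Real.cos θ := by
    rw [hzdec]
    simp only [Complex.add_re, Complex.ofReal_re, Complex.mul_re, Complex.I_re,
      Complex.I_im, Complex.ofReal_im]
    ring
  have hzim : z.im = ω / ωrα ^ 2 + A * Real.sin θ := by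
    rw [hzdec]
    simp only [Complex.add_im, Complex.ofReal_im, Complex.mul_im, Complex.I_re,
      Complex.I_im, Complex.ofReal_re]
    ring
  -- positivity of cos θ
  have ht0 : 0 < Real.arctan a := by simpa using Real.arctan_strictMono ha0
  have htlt : Real.arctan a < π / 2 := Real.arctan_lt_pi_div_two a
  have hθ0 : θ ≤ 0 := mul_nonpos_of_nonpos_of_nonneg hlam0 ht0.le
  have hθgt : -(π / 2) < θ := by
    have h1 : -1 * Real.arctan a < lam * Real.arctan a :=
      mul_lt_mul_of_pos_right hlam1 ht0
    have h2 : -(π / 2) < -1 * Real.arctan a := by linarith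
    exact lt_of_lt_of_le h2 h1.le
  have hcos : 0 < Real.cos θ :=
    Real.cos_pos_of_mem_Ioo ⟨hθgt, lt_of_le_of_lt hθ0 (by positivity)⟩
  rw [Complex.arg_eq_zero_iff, hzre, hzim]
  constructor
  · rintro ⟨-, him⟩
    have hωrα2 : (ωrα : ℝ) ^ 2 ≠ 0 := by positivity
    field_simp at him
    linear_combination him
  · intro heq
    constructor
    · have : 0 < A * Real.cos θ := mul_pos hA0 hcos
      have h2 : 0 ≤ 2 * β / ωrα := by positivity
      linarith
    · rw [heq]
      field_simp
      ring
end

section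
/- Let A be a real n×n matrix, B ∈ ℝⁿ, and ω > 0 such that iω is not an eigenvalue of A (viewed over ℂ). Define x : ℝ → ℝⁿ by x(t) = Im(e^{iωt} · (iωI − A)⁻¹ B) (imaginary part taken entrywise). Then: (i) x is differentiable and x′(t) = A x(t) + B sin(ωt) for all t; (ii) if the first entry of (iωI − A)⁻¹ B is a real number, then the first component of x satisfies x₁(t) = 0 whenever sin(ωt) = 0, and hence for the reset matrix A_ρ = diag(γ, 1, …, 1) (any γ ∈ ℝ) one has A_ρ x(kπ/ω) = x(kπ/ω) for every integer k. -/
open Real Complex Matrix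

/-- Steady-state sinusoidal response of the base linear dynamics
ẋ = Ax + B sin(ωt), and invariance under the reset map when the first entry of
(iωI − A)⁻¹B is real: x(t) = Im(e^{iωt}(iωI − A)⁻¹B) solves the ODE, its first
component vanishes at every zero crossing of sin(ωt) (the reset instants
t = kπ/ω), and there A_ρ = diag(γ,1,…,1) acts as the identity on x. -/
theorem reset_invariant_steady_state (n : ℕ)
    (A : Matrix (Fin (n + 1)) (Fin (n + 1)) ℝ) (B : Fin (n + 1) → ℝ)
    (ω : ℝ) (hω : 0 < ω)
    (hdet : ((Complex.I * ω) • (1 : Matrix (Fin (n + 1)) (Fin (n + 1)) ℂ)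
              - A.map Complex.ofReal).det ≠ 0)
    (x : ℝ → Fin (n + 1) → ℝ)
    (hx : ∀ t i, x t i =
      (Complex.exp (Complex.I * ω * t) *
        ((((Complex.I * ω) • (1 : Matrix (Fin (n + 1)) (Fin (n + 1)) ℂ)
            - A.map Complex.ofReal)⁻¹ *ᵥ fun j => ((B j : ℝ) : ℂ)) i)).im) :
    (∀ t i, HasDerivAt (fun s => x s i)
        ((A *ᵥ x t) i + Real.sin (ω * t) * B i) t) ∧
    (((((Complex.I * ω) • (1 : Matrix (Fin (n + 1)) (Fin (n + 1)) ℂ)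
          - A.map Complex.ofReal)⁻¹ *ᵥ fun j => ((B j : ℝ) : ℂ)) 0).im = 0 →
      (∀ t : ℝ, Real.sin (ω * t) = 0 → x t 0 = 0) ∧
      ∀ (γ : ℝ) (k : ℤ),
        Matrix.diagonal (fun i : Fin (n + 1) => if i = 0 then γ else 1) *ᵥ
            x (k * Real.pi / ω) = x (k * Real.pi / ω)) := by
  set M : Matrix (Fin (n + 1)) (Fin (n + 1)) ℂ :=
    (Complex.I * ω) • (1 : Matrix (Fin (n + 1)) (Fin (n + 1)) ℂ) - A.map Complex.ofReal with hM
  set c : Fin (n + 1) → ℂ := M⁻¹ *ᵥ fun j => ((B j : ℝ) : ℂ) with hc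
  set a : Fin (n + 1) → ℝ := fun i => (c i).re with ha
  set b : Fin (n + 1) → ℝ := fun i => (c i).im with hb
  -- key linear-algebra identity
  have hMc : ∀ i, Complex.I * ω * c i - (A.map Complex.ofReal *ᵥ c) i = (B i : ℂ) := by
    intro i
    have h1 : M *ᵥ c = fun j => ((B j : ℝ) : ℂ) := by
      rw [hc, Matrix.mulVec_mulVec, Matrix.mul_nonsing_inv _ (isUnit_iff_ne_zero.mpr hdet),
        Matrix.one_mulVec]
    have h2 := congrFun h1 i
    rw [hM, Matrix.sub_mulVec, Matrix.smul_mulVec, Matrix.one_mulVec] at h2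
    simpa [Pi.sub_apply, Pi.smul_apply, smul_eq_mul] using h2
  have hAre : ∀ i, ((A.map Complex.ofReal *ᵥ c) i).re = (A *ᵥ a) i := by
    intro i
    simp [Matrix.mulVec, dotProduct, Matrix.map_apply, Complex.re_sum,
      Complex.re_ofReal_mul, ha]
  have hAim : ∀ i, ((A.map Complex.ofReal *ᵥ c) i).im = (A *ᵥ b) i := by
    intro i
    simp [Matrix.mulVec, dotProduct, Matrix.map_apply, Complex.im_sum,
      Complex.im_ofReal_mul, hb]
  have hre : ∀ i, -ω * b i - (A *ᵥ a) i = B i := by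
    intro i
    have := congrArg Complex.re (hMc i)
    simpa [Complex.mul_re, hAre i, ha, hb] using this
  have him : ∀ i, ω * a i - (A *ᵥ b) i = 0 := by
    intro i
    have := congrArg Complex.im (hMc i)
    simpa [Complex.mul_im, hAim i, ha, hb] using this
  -- explicit real form of x
  have hxf : ∀ t i, x t i = Real.sin (ω * t) * a i + Real.cos (ω * t) * b i := by
    intro t i
    rw [hx t i]
    have he : Complex.I * ω * t = ((ω * t : ℝ) : ℂ) * Complex.I := by
      push_cast; ring
    rw [he, Complex.exp_mul_I]
    simp [add_mul, Complex.add_im, Complex.mul_im, Complex.mul_re, Complex.I_re,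
      Complex.I_im, ← Complex.ofReal_mul, Complex.cos_ofReal_re, Complex.sin_ofReal_re,
      Complex.cos_ofReal_im, Complex.sin_ofReal_im, ha, hb]
    ring
  constructor
  · intro t i
    have h1 : HasDerivAt (fun s : ℝ => ω * s) ω t := by
      simpa using (hasDerivAt_id t).const_mul ω
    have hs : HasDerivAt (fun s : ℝ => Real.sin (ω * s)) (Real.cos (ω * t) * ω) t :=
      (Real.hasDerivAt_sin (ω * t)).comp t h1
    have hcos : HasDerivAt (fun s : ℝ => Real.cos (ω * s)) (-Real.sin (ω * t) * ω) t :=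
      (Real.hasDerivAt_cos (ω * t)).comp t h1
    have hd : HasDerivAt (fun s => x s i)
        (Real.cos (ω * t) * ω * a i + -Real.sin (ω * t) * ω * b i) t := by
      have := (hs.mul_const (a i)).add (hcos.mul_const (b i))
      simpa [hxf, Pi.add_def] using this
    convert hd using 1
    have hAx : (A *ᵥ x t) i = Real.sin (ω * t) * (A *ᵥ a) i + Real.cos (ω * t) * (A *ᵥ b) i := by
      simp only [Matrix.mulVec, dotProduct, hxf, Finset.mul_sum, mul_add]
      rw [← Finset.sum_add_distrib]
      congr 1; ext j; ring
    have e1 : (A *ᵥ a) i = -ω * b i - B i := by linarith [hre i]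
    have e2 : (A *ᵥ b) i = ω * a i := by linarith [him i]
    rw [hAx, e1, e2]; ring
  · intro h0
    have hb0 : b 0 = 0 := h0
    have hx0 : ∀ t : ℝ, Real.sin (ω * t) = 0 → x t 0 = 0 := by
      intro t ht
      rw [hxf t 0, hb0, ht]; ring
    refine ⟨hx0, fun γ k => ?_⟩
    have hsin : Real.sin (ω * (k * Real.pi / ω)) = 0 := by
      have : ω * (k * Real.pi / ω) = k * Real.pi := by
        field_simp
      rw [this]
      exact Real.sin_int_mul_pi k
    have hx00 : x (k * Real.pi / ω) 0 = 0 := hx0 _ hsin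
    funext i
    rw [Matrix.mulVec_diagonal]
    by_cases hi : i = 0
    · subst hi; rw [hx00]; simp
    · simp [hi]
end

section
/- Let n_p, n_nr, n_r be natural numbers and consider vectors partitioned as x = (x_p, x_nr, x_r) ∈ ℝ^{n_p} × ℝ^{n_nr} × ℝ^{n_r}. Let P be a symmetric real matrix on ℝ^{n_p+n_nr+n_r}, partitioned conformally, let C_p ∈ ℝ^{1×n_p}, β ∈ ℝ^{n_r×1}, P_ρ ∈ ℝ^{n_r×n_r}, and A_ρ ∈ ℝ^{n_r×n_r}. Assume the bottom block row of P satisfies (P_{r,p}, P_{r,nr}, P_{r,r}) = (βC_p, 0, P_ρ) (i.e. B₀ᵀP = C₀ with B₀ = [0; 0; I_{n_r}] and C₀ = [βC_p, 0, P_ρ]), and that A_ρᵀ P_ρ A_ρ − P_ρ is negative semidefinite. Then for every x = (x_p, x_nr, x_r) with C_p x_p = 0, the jumped vector Jx = (x_p, x_nr, A_ρ x_r) satisfies (Jx)ᵀ P (Jx) ≤ xᵀ P x. -/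
open Matrix

/-- Jump part of the H_β theorem: if the bottom block row of the symmetric
matrix P is (βC_p, 0, P_ρ) (i.e. B₀ᵀP = C₀) and A_ρᵀP_ρA_ρ − P_ρ ≤ 0, then the
quadratic form xᵀPx does not increase across a reset x ↦ (x_p, x_nr, A_ρ x_r)
on the reset surface C_p x_p = 0. -/
theorem hbeta_jump_condition (np nnr nr : ℕ)
    (P : Matrix (Fin np ⊕ Fin nnr ⊕ Fin nr) (Fin np ⊕ Fin nnr ⊕ Fin nr) ℝ)
    (hPsymm : P.IsSymm)
    (Cp : Fin np → ℝ) (β : Fin nr → ℝ)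
    (Pρ Aρ : Matrix (Fin nr) (Fin nr) ℝ)
    (hrow_p : ∀ (i : Fin nr) (j : Fin np),
      P (Sum.inr (Sum.inr i)) (Sum.inl j) = β i * Cp j)
    (hrow_nr : ∀ (i : Fin nr) (j : Fin nnr),
      P (Sum.inr (Sum.inr i)) (Sum.inr (Sum.inl j)) = 0)
    (hrow_r : ∀ i j : Fin nr,
      P (Sum.inr (Sum.inr i)) (Sum.inr (Sum.inr j)) = Pρ i j)
    (hjump : (Pρ - Aρᵀ * Pρ * Aρ).PosSemidef) :
    ∀ x : Fin np ⊕ Fin nnr ⊕ Fin nr → ℝ,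
      Cp ⬝ᵥ (fun j => x (Sum.inl j)) = 0 →
      ∀ Jx : Fin np ⊕ Fin nnr ⊕ Fin nr → ℝ,
        (∀ j, Jx (Sum.inl j) = x (Sum.inl j)) →
        (∀ j, Jx (Sum.inr (Sum.inl j)) = x (Sum.inr (Sum.inl j))) →
        (∀ j, Jx (Sum.inr (Sum.inr j))
            = (Aρ *ᵥ fun i => x (Sum.inr (Sum.inr i))) j) →
        Jx ⬝ᵥ (P *ᵥ Jx) ≤ x ⬝ᵥ (P *ᵥ x) := by

  intro x hx Jx hJp hJq hJr
  classical
  set p : Fin np → ℝ := fun j => x (Sum.inl j) with hp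
  set q : Fin nnr → ℝ := fun j => x (Sum.inr (Sum.inl j)) with hq
  set r : Fin nr → ℝ := fun j => x (Sum.inr (Sum.inr j)) with hr
  have hcol_p : ∀ (j : Fin np) (i : Fin nr),
      P (Sum.inl j) (Sum.inr (Sum.inr i)) = β i * Cp j := by
    intro j i; rw [← hrow_p i j]; exact (hPsymm.apply _ _).symm
  have hcol_nr : ∀ (j : Fin nnr) (i : Fin nr),
      P (Sum.inr (Sum.inl j)) (Sum.inr (Sum.inr i)) = 0 := by
    intro j i; rw [← hrow_nr i j]; exact (hPsymm.apply _ _).symm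
  have hx' : (∑ j, Cp j * p j) = 0 := hx
  have quad : ∀ s : Fin nr → ℝ,
      (Sum.elim p (Sum.elim q s)) ⬝ᵥ (P *ᵥ (Sum.elim p (Sum.elim q s)))
        = (Sum.elim p (Sum.elim q (0 : Fin nr → ℝ))) ⬝ᵥ
            (P *ᵥ (Sum.elim p (Sum.elim q 0)))
          + s ⬝ᵥ (Pρ *ᵥ s) := by
    intro s
    simp only [dotProduct, mulVec, Fintype.sum_sum_type, Sum.elim_inl, Sum.elim_inr,
      hrow_p, hrow_nr, hrow_r, hcol_p, hcol_nr, Pi.zero_apply, mul_zero, zero_mul,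
      Finset.sum_const_zero, add_zero, zero_add]
    have h1 : ∀ j : Fin np, (∑ k, β k * Cp j * s k) = Cp j * ∑ k, β k * s k := by
      intro j; rw [Finset.mul_sum]; exact Finset.sum_congr rfl (fun k _ => by ring)
    have h2 : ∀ k : Fin nr, (∑ j, β k * Cp j * p j) = 0 := by
      intro k
      have : (∑ j, β k * Cp j * p j) = β k * ∑ j, Cp j * p j := by
        rw [Finset.mul_sum]; exact Finset.sum_congr rfl (fun j _ => by ring)
      rw [this, hx', mul_zero]
    have h3 : (∑ j, p j * (Cp j * ∑ k, β k * s k)) = 0 := by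
      have : (∑ j, p j * (Cp j * ∑ k, β k * s k))
          = (∑ j, Cp j * p j) * ∑ k, β k * s k := by
        rw [Finset.sum_mul]; exact Finset.sum_congr rfl (fun j _ => by ring)
      rw [this, hx', zero_mul]
    simp only [h1, h2, zero_add, mul_add, Finset.sum_add_distrib, h3, add_zero]
    ring
  have hxeq : x = Sum.elim p (Sum.elim q r) := by
    funext i; rcases i with j | j | j <;> rfl
  have hJeq : Jx = Sum.elim p (Sum.elim q (Aρ *ᵥ r)) := by
    funext i; rcases i with j | j | j
    · exact hJp j
    · exact hJq j
    · exact hJr j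
  have hpsd : 0 ≤ r ⬝ᵥ ((Pρ - Aρᵀ * Pρ * Aρ) *ᵥ r) := by simpa using hjump.dotProduct_mulVec_nonneg r
  have hADot : r ⬝ᵥ ((Aρᵀ * Pρ * Aρ) *ᵥ r) = (Aρ *ᵥ r) ⬝ᵥ (Pρ *ᵥ (Aρ *ᵥ r)) := by
    rw [← mulVec_mulVec, ← mulVec_mulVec, dotProduct_mulVec, vecMul_transpose]
  rw [sub_mulVec, dotProduct_sub, hADot] at hpsd
  calc Jx ⬝ᵥ (P *ᵥ Jx)
      = (Sum.elim p (Sum.elim q (0 : Fin nr → ℝ))) ⬝ᵥ (P *ᵥ (Sum.elim p (Sum.elim q 0)))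
          + (Aρ *ᵥ r) ⬝ᵥ (Pρ *ᵥ (Aρ *ᵥ r)) := by rw [hJeq, quad]
    _ ≤ (Sum.elim p (Sum.elim q (0 : Fin nr → ℝ))) ⬝ᵥ (P *ᵥ (Sum.elim p (Sum.elim q 0)))
          + r ⬝ᵥ (Pρ *ᵥ r) := by linarith
    _ = x ⬝ᵥ (P *ᵥ x) := by rw [hxeq, quad r]
end
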